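/- Let 𝒳 = {1, 2, 3, 4} with probabilities p(1) = 0.1, p(2) = 0.2, p(3) = 0.3, p(4) = 0.4. Then every GBSC code c for (𝒳, p) has expected code length L(c) = 2, whereas there exists a binary prefix code c′ on 𝒳 with expected code length L(c′) = 1.9. Hence GBSC does not always achieve the minimum expected code length. -/

import Mathlib

open Finset

/-- The set of symbols of `X` whose codeword (under `c`) has `w` as a prefix. -/
def codeS {α : Type*} [DecidableEq α] (X : Finset α) (c : α → List Bool)
    (w : List Bool) : Finset α :=
  X.filter fun x => w <+: c x

/-- The total probability of the symbols of `X` whose codeword has `w` as a prefix. -/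
def codeP {α : Type*} [DecidableEq α] (X : Finset α) (p : α → ℝ) (c : α → List Bool)
    (w : List Bool) : ℝ :=
  ∑ x ∈ codeS X c w, p x

/-- `c` is a binary prefix code on `X`: it is injective on `X` and no codeword is a
(proper) prefix of another codeword. -/
def IsPrefixCode {α : Type*} [DecidableEq α] (X : Finset α) (c : α → List Bool) : Prop :=
  Set.InjOn c X ∧ ∀ x ∈ X, ∀ y ∈ X, x ≠ y → ¬ (c x <+: c y)

/-- `c` is a greedy binary separation code (GBSC code) for `(X, p)`:
it is a prefix code on `X`; whenever `S(w)` is a singleton `{x}`, then `c x = w`; and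
whenever `|S(w)| ≥ 2`, the probability split `|P(w0) - P(w1)|` is at most the imbalance of
every binary partition of `S(w)`. -/
def IsGBSC {α : Type*} [DecidableEq α] (X : Finset α) (p : α → ℝ)
    (c : α → List Bool) : Prop :=
  IsPrefixCode X c ∧
  (∀ w : List Bool, ∀ x ∈ X, codeS X c w = {x} → c x = w) ∧
  (∀ w : List Bool, 2 ≤ (codeS X c w).card →
    ∀ A B : Finset α, Disjoint A B → A ∪ B = codeS X c w →
      |codeP X p c (w ++ [false]) - codeP X p c (w ++ [true])| ≤
        |(∑ x ∈ A, p x) - ∑ x ∈ B, p x|)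

/-- The distribution `(0.1, 0.2, 0.3, 0.4)` on a four-element alphabet. -/
noncomputable def pEx : Fin 4 → ℝ := ![0.1, 0.2, 0.3, 0.4]

lemma sum_pEx (T : Finset (Fin 4)) :
    ∑ x ∈ T, pEx x = (if (0:Fin 4) ∈ T then 0.1 else 0) + (if (1:Fin 4) ∈ T then 0.2 else 0)
      + (if (2:Fin 4) ∈ T then 0.3 else 0) + (if (3:Fin 4) ∈ T then 0.4 else 0) := by
  have h : ∑ x ∈ T, pEx x = ∑ x ∈ Finset.univ, if x ∈ T then pEx x else 0 := by
    rw [Finset.sum_ite_mem, Finset.univ_inter]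
  rw [h, Fin.sum_univ_four]
  simp [pEx]

lemma half_lemma (T : Finset (Fin 4)) (h : ∑ x ∈ T, pEx x = 0.5) :
    T = {0, 3} ∨ T = {1, 2} := by
  rw [sum_pEx] at h
  by_cases h0 : (0:Fin 4) ∈ T <;> by_cases h1 : (1:Fin 4) ∈ T <;>
    by_cases h2 : (2:Fin 4) ∈ T <;> by_cases h3 : (3:Fin 4) ∈ T <;>
    first
      | (norm_num [h0, h1, h2, h3] at h; done)
      | (left; ext x; fin_cases x <;> simp [h0, h1, h2, h3] <;> try decide
         done)
      | (right; ext x; fin_cases x <;> simp [h0, h1, h2, h3] <;> try decide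
         done)

lemma split_lemma (c : Fin 4 → List Bool) (hpc : IsPrefixCode Finset.univ c)
    (w : List Bool) (hcard : 2 ≤ (codeS Finset.univ c w).card) :
    Disjoint (codeS Finset.univ c (w ++ [false])) (codeS Finset.univ c (w ++ [true])) ∧
    codeS Finset.univ c (w ++ [false]) ∪ codeS Finset.univ c (w ++ [true])
      = codeS Finset.univ c w := by
  constructor
  · rw [Finset.disjoint_left]
    intro x hxf hxt
    simp only [codeS, Finset.mem_filter] at hxf hxt
    have hf := List.prefix_iff_eq_take.mp hxf.2
    have ht := List.prefix_iff_eq_take.mp hxt.2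
    have : (w ++ [false] : List Bool) = w ++ [true] := by
      rw [hf, ht]; simp
    simp at this
  · ext x
    simp only [codeS, Finset.mem_union, Finset.mem_filter, Finset.mem_univ, true_and]
    constructor
    · rintro (h | h) <;> exact (List.prefix_append w _).trans h
    · intro h
      have hne : c x ≠ w := by
        intro hcx
        obtain ⟨y, hy, hyx⟩ := Finset.exists_mem_ne
          (lt_of_lt_of_le one_lt_two hcard) x
        simp only [codeS, Finset.mem_filter] at hy
        exact hpc.2 x (Finset.mem_univ x) y (Finset.mem_univ y) hyx.symm (hcx ▸ hy.2)
      obtain ⟨t, ht⟩ := h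
      match t, ht with
      | [], ht => exact absurd (by simp [← ht]) hne
      | false :: t', ht => exact Or.inl ⟨t', by simp [← ht]⟩
      | true :: t', ht => exact Or.inr ⟨t', by simp [← ht]⟩

lemma pEx_pos (i : Fin 4) : 0 < pEx i := by fin_cases i <;> norm_num [pEx]

lemma compl_det {S T A B : Finset (Fin 4)} (hdisj : Disjoint S T)
    (huniv : S ∪ T = Finset.univ) (hS : S = A)
    (hAB : ∀ y : Fin 4, y ∉ A ↔ y ∈ B) : T = B := by
  ext x
  constructor
  · intro hx
    have h1 : x ∉ S := Finset.disjoint_right.mp hdisj hx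
    rw [hS] at h1
    exact (hAB x).mp h1
  · intro hx
    have h1 : x ∉ S := by rw [hS]; exact (hAB x).mpr hx
    have h2 : x ∈ S ∪ T := by rw [huniv]; exact Finset.mem_univ x
    rcases Finset.mem_union.mp h2 with h | h
    · exact absurd h h1
    · exact h

lemma pair_step (c : Fin 4 → List Bool) (h : IsGBSC Finset.univ pEx c)
    (w : List Bool) (i j : Fin 4) (hij : i ≠ j)
    (hS : codeS Finset.univ c w = {i, j}) :
    (c i = w ++ [false] ∧ c j = w ++ [true]) ∨
    (c i = w ++ [true] ∧ c j = w ++ [false]) := by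
  obtain ⟨hpc, hsing, hbal⟩ := h
  have hcard : 2 ≤ (codeS Finset.univ c w).card := by
    rw [hS, Finset.card_pair hij]
  obtain ⟨hdisj, hunion⟩ := split_lemma c hpc w hcard
  have hb := hbal w hcard {i} {j} (Finset.disjoint_singleton.mpr hij) (by rw [hS]; rfl)
  rw [Finset.sum_singleton, Finset.sum_singleton] at hb
  have hPsum : codeP Finset.univ pEx c (w ++ [false]) + codeP Finset.univ pEx c (w ++ [true])
      = pEx i + pEx j := by
    show (∑ x ∈ _, pEx x) + (∑ x ∈ _, pEx x) = _
    rw [← Finset.sum_union hdisj, hunion, hS, Finset.sum_pair hij]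
  have hsubf : ∀ x, x ∈ codeS Finset.univ c (w ++ [false]) → x = i ∨ x = j := by
    intro x hx
    have : x ∈ ({i, j} : Finset (Fin 4)) := by
      rw [← hS, ← hunion]; exact Finset.mem_union_left _ hx
    simpa using this
  have hsubt : ∀ x, x ∈ codeS Finset.univ c (w ++ [true]) → x = i ∨ x = j := by
    intro x hx
    have : x ∈ ({i, j} : Finset (Fin 4)) := by
      rw [← hS, ← hunion]; exact Finset.mem_union_right _ hx
    simpa using this
  have hpi := pEx_pos i
  have hpj := pEx_pos j
  have habs : |pEx i - pEx j| < pEx i + pEx j := by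
    rw [abs_sub_lt_iff]; constructor <;> linarith
  by_cases hi : i ∈ codeS Finset.univ c (w ++ [false]) <;>
    by_cases hj : j ∈ codeS Finset.univ c (w ++ [false])
  · exfalso
    have hte : codeS Finset.univ c (w ++ [true]) = ∅ := by
      rw [Finset.eq_empty_iff_forall_notMem]
      intro x hx
      rcases hsubt x hx with h' | h' <;> rw [h'] at hx
      · exact Finset.disjoint_left.mp hdisj hi hx
      · exact Finset.disjoint_left.mp hdisj hj hx
    have ht0 : codeP Finset.univ pEx c (w ++ [true]) = 0 := by
      show ∑ x ∈ _, pEx x = 0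
      rw [hte, Finset.sum_empty]
    rw [ht0] at hPsum hb
    have hPfval : codeP Finset.univ pEx c (w ++ [false]) = pEx i + pEx j := by linarith
    rw [hPfval, sub_zero, abs_of_pos (by linarith)] at hb
    linarith
  · left
    have hSf : codeS Finset.univ c (w ++ [false]) = {i} := by
      ext x
      simp only [Finset.mem_singleton]
      constructor
      · intro hx
        rcases hsubf x hx with h' | h'
        · exact h'
        · rw [h'] at hx; exact absurd hx hj
      · intro h'; rw [h']; exact hi
    have hSt : codeS Finset.univ c (w ++ [true]) = {j} := by
      ext x
      simp only [Finset.mem_singleton]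
      constructor
      · intro hx
        rcases hsubt x hx with h' | h'
        · rw [h'] at hx; exact absurd hx (Finset.disjoint_left.mp hdisj hi)
        · exact h'
      · intro h'
        rw [h']
        have hju : j ∈ codeS Finset.univ c w := by rw [hS]; simp
        rw [← hunion] at hju
        rcases Finset.mem_union.mp hju with h'' | h''
        · exact absurd h'' hj
        · exact h''
    exact ⟨hsing _ i (Finset.mem_univ i) hSf, hsing _ j (Finset.mem_univ j) hSt⟩
  · right
    have hSf : codeS Finset.univ c (w ++ [false]) = {j} := by
      ext x
      simp only [Finset.mem_singleton]
      constructor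
      · intro hx
        rcases hsubf x hx with h' | h'
        · rw [h'] at hx; exact absurd hx hi
        · exact h'
      · intro h'; rw [h']; exact hj
    have hSt : codeS Finset.univ c (w ++ [true]) = {i} := by
      ext x
      simp only [Finset.mem_singleton]
      constructor
      · intro hx
        rcases hsubt x hx with h' | h'
        · exact h'
        · rw [h'] at hx; exact absurd hx (Finset.disjoint_left.mp hdisj hj)
      · intro h'
        rw [h']
        have hiu : i ∈ codeS Finset.univ c w := by rw [hS]; simp
        rw [← hunion] at hiu
        rcases Finset.mem_union.mp hiu with h'' | h''
        · exact absurd h'' hi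
        · exact h''
    exact ⟨hsing _ i (Finset.mem_univ i) hSt, hsing _ j (Finset.mem_univ j) hSf⟩
  · exfalso
    have hfe : codeS Finset.univ c (w ++ [false]) = ∅ := by
      rw [Finset.eq_empty_iff_forall_notMem]
      intro x hx
      rcases hsubf x hx with h' | h' <;> rw [h'] at hx
      · exact hi hx
      · exact hj hx
    have hf0 : codeP Finset.univ pEx c (w ++ [false]) = 0 := by
      show ∑ x ∈ _, pEx x = 0
      rw [hfe, Finset.sum_empty]
    rw [hf0] at hPsum hb
    have hPtval : codeP Finset.univ pEx c (w ++ [true]) = pEx i + pEx j := by linarith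
    rw [hPtval, zero_sub, abs_neg, abs_of_pos (by linarith)] at hb
    linarith

def cEx : Fin 4 → List Bool := ![[true, true, true], [true, true, false], [true, false], [false]]

/-- For the distribution `(0.1, 0.2, 0.3, 0.4)` on four symbols, every GBSC code has
expected length exactly `2`, while some binary prefix code has expected length `1.9`.
Hence GBSC does not always achieve the minimum expected code length. -/
theorem gbsc_not_optimal :
    (∀ c : Fin 4 → List Bool, IsGBSC (Finset.univ : Finset (Fin 4)) pEx c →
      ∑ x ∈ (Finset.univ : Finset (Fin 4)), pEx x * ((c x).length : ℝ) = 2) ∧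
    (∃ c' : Fin 4 → List Bool, IsPrefixCode (Finset.univ : Finset (Fin 4)) c' ∧
      ∑ x ∈ (Finset.univ : Finset (Fin 4)), pEx x * ((c' x).length : ℝ) = 1.9) := by
  constructor
  · intro c hG
    obtain ⟨hpc, hsing, hbal⟩ := hG
    have hS0 : codeS Finset.univ c [] = Finset.univ := by
      ext x; simp [codeS]
    have hcard : 2 ≤ (codeS Finset.univ c []).card := by
      rw [hS0]; decide
    obtain ⟨hdisj, hunion⟩ := split_lemma c hpc [] hcard
    simp only [List.nil_append] at hdisj hunion
    have huniv : codeS Finset.univ c [false] ∪ codeS Finset.univ c [true] = Finset.univ := by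
      rw [hunion, hS0]
    have hb := hbal [] hcard {0, 3} {1, 2} (by decide) (by rw [hS0]; decide)
    simp only [List.nil_append] at hb
    rw [Finset.sum_pair (by decide), Finset.sum_pair (by decide),
      show pEx 0 + pEx 3 = 0.5 by simp [pEx]; norm_num,
      show pEx 1 + pEx 2 = 0.5 by simp [pEx]; norm_num, sub_self, abs_zero] at hb
    have hPsum : codeP Finset.univ pEx c [false] + codeP Finset.univ pEx c [true] = 1 := by
      show (∑ x ∈ _, pEx x) + (∑ x ∈ _, pEx x) = 1
      rw [← Finset.sum_union hdisj, huniv, sum_pEx]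
      norm_num
    have hPf : codeP Finset.univ pEx c [false] = 0.5 := by
      have hnn := abs_nonneg (codeP Finset.univ pEx c [false] - codeP Finset.univ pEx c [true])
      have heq := abs_eq_zero.mp (le_antisymm hb hnn)
      linarith
    rcases half_lemma (codeS Finset.univ c [false]) hPf with hf | hf
    · have ht' : codeS Finset.univ c [true] = {1, 2} :=
        compl_det hdisj huniv hf (by decide)
      obtain ⟨h03a, h03b⟩ | ⟨h03a, h03b⟩ :=
        pair_step c ⟨hpc, hsing, hbal⟩ [false] 0 3 (by decide) hf <;>
      obtain ⟨h12a, h12b⟩ | ⟨h12a, h12b⟩ :=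
        pair_step c ⟨hpc, hsing, hbal⟩ [true] 1 2 (by decide) ht' <;>
      · rw [Fin.sum_univ_four, h03a, h03b, h12a, h12b]
        simp [pEx]; norm_num
    · have ht' : codeS Finset.univ c [true] = {0, 3} :=
        compl_det hdisj huniv hf (by decide)
      obtain ⟨h12a, h12b⟩ | ⟨h12a, h12b⟩ :=
        pair_step c ⟨hpc, hsing, hbal⟩ [false] 1 2 (by decide) hf <;>
      obtain ⟨h03a, h03b⟩ | ⟨h03a, h03b⟩ :=
        pair_step c ⟨hpc, hsing, hbal⟩ [true] 0 3 (by decide) ht' <;>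
      · rw [Fin.sum_univ_four, h03a, h03b, h12a, h12b]
        simp [pEx]; norm_num
  · refine ⟨cEx, ⟨fun x _ y _ h => (show Function.Injective cEx by decide) h, ?_⟩, ?_⟩
    · decide
    · rw [Fin.sum_univ_four]
      simp [pEx, cEx]; norm_num
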